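/- Let $x\in(0,1)$ and $\ell\in\{0,\dots,n\}$ with $x\in[\ell/(n+1),(\ell+1)/(n+1))$. Then for the Kantorovich operator, $K_n(\mathrm{sign}(\cdot-x))(x)=2\sum_{k=\ell+1}^n p_{n,k}(x)-1+2p_{n,\ell}(x)[(\ell+1)-(n+1)x]$, and hence $|K_n(\mathrm{sign}(\cdot-x))(x)|\le 2\left|\sum_{(n+1)x<k\le n}p_{n,k}(x)-\tfrac12\right|+2p_{n,\ell}(x)$. -/

import Mathlib

open Set MeasureTheory Finset

/-- Bernstein basis polynomial `p_{n,k}(x) = C(n,k) x^k (1-x)^{n-k}`. -/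
noncomputable def bernstein' (n k : ℕ) (x : ℝ) : ℝ :=
  (n.choose k : ℝ) * x ^ k * (1 - x) ^ (n - k)

/-- The Kantorovich operator
`K_n f(x) = (n+1) ∑_{k=0}^n p_{n,k}(x) ∫_{k/(n+1)}^{(k+1)/(n+1)} f(t) dt`. -/
noncomputable def kantorovich (n : ℕ) (f : ℝ → ℝ) (x : ℝ) : ℝ :=
  (n + 1 : ℝ) * ∑ k ∈ Finset.range (n + 1),
    bernstein' n k x * ∫ t in ((k : ℝ) / (n + 1))..(((k : ℝ) + 1) / (n + 1)), f t

lemma measurable_realSign : Measurable Real.sign := by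
  unfold Real.sign
  exact Measurable.ite (measurableSet_lt measurable_id measurable_const) measurable_const
    (Measurable.ite (measurableSet_lt measurable_const measurable_id) measurable_const
      measurable_const)

lemma intInt_sign (x a b : ℝ) :
    IntervalIntegrable (fun t => Real.sign (t - x)) volume a b := by
  apply IntervalIntegrable.mono_fun (f := fun _ => (1:ℝ)) intervalIntegrable_const
  · exact ((measurable_realSign.comp (measurable_id.sub measurable_const))).aestronglyMeasurable
  · refine Filter.Eventually.of_forall fun t => ?_
    rcases Real.sign_apply_eq (t - x) with h|h|h <;> simp [h]

lemma ae_ne_pt (x : ℝ) : ∀ᵐ t : ℝ, t ≠ x := by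
  simp [ae_iff]

lemma int_sign_le {x a b : ℝ} (hab : a ≤ b) (hbx : b ≤ x) :
    ∫ t in a..b, Real.sign (t - x) = a - b := by
  rw [intervalIntegral.integral_congr_ae (g := fun _ => (-1:ℝ)) ?_]
  · simp
  · filter_upwards [ae_ne_pt x] with t ht hti
    rw [Set.uIoc_of_le hab] at hti
    exact Real.sign_of_neg (by rcases lt_or_eq_of_le (hti.2.trans hbx) with h|h <;> [linarith; exact absurd h ht])

lemma int_sign_ge {x a b : ℝ} (hab : a ≤ b) (hxa : x ≤ a) :
    ∫ t in a..b, Real.sign (t - x) = b - a := by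
  rw [intervalIntegral.integral_congr_ae (g := fun _ => (1:ℝ))]
  · simp
  · filter_upwards with t hti
    rw [Set.uIoc_of_le hab] at hti
    exact Real.sign_of_pos (by linarith [hti.1])

lemma bernstein'_sum (n : ℕ) (x : ℝ) :
    ∑ k ∈ Finset.range (n + 1), bernstein' n k x = 1 := by
  have h : ∑ k ∈ Finset.range (n + 1), bernstein' n k x = (x + (1 - x)) ^ n := by
    rw [add_pow]
    exact Finset.sum_congr rfl fun k _ => by simp [bernstein']; ring
  rw [h]; norm_num

lemma bernstein'_nonneg (n k : ℕ) {x : ℝ} (h0 : 0 ≤ x) (h1 : x ≤ 1) :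
    0 ≤ bernstein' n k x := by
  apply mul_nonneg (mul_nonneg (by positivity) (by positivity))
  exact pow_nonneg (by linarith) _


/-- The value of the Kantorovich operator on `sign(· - x)` for
`x ∈ [ℓ/(n+1), (ℓ+1)/(n+1))`, and the resulting estimate. -/
theorem stmt19 (n ℓ : ℕ) (hℓ : ℓ ≤ n) (x : ℝ) (hx : x ∈ Set.Ioo (0 : ℝ) 1)
    (hxl : x ∈ Set.Ico ((ℓ : ℝ) / (n + 1)) (((ℓ : ℝ) + 1) / (n + 1))) :
    kantorovich n (fun t => Real.sign (t - x)) x =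
      2 * (∑ k ∈ Finset.Ioc ℓ n, bernstein' n k x) - 1
        + 2 * bernstein' n ℓ x * (((ℓ : ℝ) + 1) - ((n : ℝ) + 1) * x) ∧
    |kantorovich n (fun t => Real.sign (t - x)) x| ≤
      2 * |(∑ k ∈ (Finset.range (n + 1)).filter (fun k : ℕ => ((n : ℝ) + 1) * x < (k : ℝ)),
              bernstein' n k x) - 1 / 2|
        + 2 * bernstein' n ℓ x := by
  obtain ⟨hx0, hx1⟩ := hx
  obtain ⟨hxl1, hxl2⟩ := hxl
  have hNpos : (0 : ℝ) < (n : ℝ) + 1 := by positivity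
  have hlx : (ℓ : ℝ) ≤ ((n : ℝ) + 1) * x := by
    rw [div_le_iff₀ hNpos] at hxl1; linarith
  have hxl' : ((n : ℝ) + 1) * x < (ℓ : ℝ) + 1 := by
    rw [lt_div_iff₀ hNpos] at hxl2; linarith
  set p : ℝ := bernstein' n ℓ x with hp
  set S : ℝ := ∑ k ∈ Finset.Ioc ℓ n, bernstein' n k x with hS
  have key : kantorovich n (fun t => Real.sign (t - x)) x
      = 2 * S - 1 + 2 * p * (((ℓ : ℝ) + 1) - ((n : ℝ) + 1) * x) := by
    have hsplit : Finset.range (n + 1) = Finset.range (ℓ + 1) ∪ Finset.Ioc ℓ n := by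
      ext k
      simp only [Finset.mem_range, Finset.mem_union, Finset.mem_Ioc, Nat.lt_succ_iff]
      omega
    have hdisj : Disjoint (Finset.range (ℓ + 1)) (Finset.Ioc ℓ n) := by
      rw [Finset.disjoint_left]
      intro k hk hk'
      simp only [Finset.mem_range, Nat.lt_succ_iff] at hk
      simp only [Finset.mem_Ioc] at hk'
      omega
    have hsum1 : ∑ k ∈ Finset.range ℓ, bernstein' n k x = 1 - p - S := by
      have h := bernstein'_sum n x
      rw [hsplit, Finset.sum_union hdisj, Finset.sum_range_succ] at h
      linarith
    unfold kantorovich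
    beta_reduce
    rw [hsplit, Finset.sum_union hdisj, Finset.sum_range_succ]
    have e1 : ∀ k ∈ Finset.range ℓ, bernstein' n k x *
        (∫ t in ((k : ℝ) / (n + 1))..(((k : ℝ) + 1) / (n + 1)), Real.sign (t - x))
        = bernstein' n k x * (-(1 / ((n : ℝ) + 1))) := by
      intro k hk
      rw [Finset.mem_range] at hk
      have hk' : (k : ℝ) + 1 ≤ (ℓ : ℝ) := by exact_mod_cast hk
      have hab : (k : ℝ) / (n + 1) ≤ ((k : ℝ) + 1) / (n + 1) := by gcongr; linarith
      have hbx : ((k : ℝ) + 1) / (n + 1) ≤ x := le_trans (by gcongr) hxl1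
      rw [int_sign_le hab hbx]
      congr 1
      field_simp
      ring
    have e2 : ∀ k ∈ Finset.Ioc ℓ n, bernstein' n k x *
        (∫ t in ((k : ℝ) / (n + 1))..(((k : ℝ) + 1) / (n + 1)), Real.sign (t - x))
        = bernstein' n k x * (1 / ((n : ℝ) + 1)) := by
      intro k hk
      rw [Finset.mem_Ioc] at hk
      have hk' : (ℓ : ℝ) + 1 ≤ (k : ℝ) := by exact_mod_cast Nat.succ_le_of_lt hk.1
      have hab : (k : ℝ) / (n + 1) ≤ ((k : ℝ) + 1) / (n + 1) := by gcongr; linarith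
      have hxa : x ≤ (k : ℝ) / (n + 1) := le_trans (le_of_lt hxl2) (by gcongr)
      rw [int_sign_ge hab hxa]
      congr 1
      field_simp
      ring
    have e3 : (∫ t in ((ℓ : ℝ) / (n + 1))..(((ℓ : ℝ) + 1) / (n + 1)), Real.sign (t - x))
        = ((ℓ : ℝ) / ((n : ℝ) + 1) - x) + (((ℓ : ℝ) + 1) / ((n : ℝ) + 1) - x) := by
      rw [← intervalIntegral.integral_add_adjacent_intervals (b := x)
        (intInt_sign x _ _) (intInt_sign x _ _)]
      rw [int_sign_le hxl1 le_rfl, int_sign_ge (le_of_lt hxl2) le_rfl]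
    rw [Finset.sum_congr rfl e1, Finset.sum_congr rfl e2, e3, ← Finset.sum_mul,
      ← Finset.sum_mul, hsum1, ← hS, ← hp]
    field_simp
    ring
  refine ⟨key, ?_⟩
  have hfl : (Finset.range (n + 1)).filter (fun k : ℕ => ((n : ℝ) + 1) * x < (k : ℝ))
      = Finset.Ioc ℓ n := by
    ext k
    simp only [Finset.mem_filter, Finset.mem_range, Finset.mem_Ioc, Nat.lt_succ_iff]
    constructor
    · rintro ⟨hkn, hkx⟩
      refine ⟨?_, hkn⟩
      by_contra h
      push_neg at h
      have : (k : ℝ) ≤ (ℓ : ℝ) := by exact_mod_cast h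
      linarith
    · rintro ⟨hk1, hk2⟩
      refine ⟨hk2, ?_⟩
      have : (ℓ : ℝ) + 1 ≤ (k : ℝ) := by exact_mod_cast Nat.succ_le_of_lt hk1
      linarith
  rw [hfl, key]
  have hpnn : 0 ≤ p := bernstein'_nonneg n ℓ (le_of_lt hx0) (le_of_lt hx1)
  have hc1 : ((ℓ : ℝ) + 1) - ((n : ℝ) + 1) * x ≤ 1 := by linarith
  have hc0 : 0 ≤ ((ℓ : ℝ) + 1) - ((n : ℝ) + 1) * x := by linarith
  have habs : |2 * S - 1 + 2 * p * (((ℓ : ℝ) + 1) - ((n : ℝ) + 1) * x)|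
      ≤ |2 * S - 1| + 2 * p := by
    calc |2 * S - 1 + 2 * p * (((ℓ : ℝ) + 1) - ((n : ℝ) + 1) * x)|
        ≤ |2 * S - 1| + |2 * p * (((ℓ : ℝ) + 1) - ((n : ℝ) + 1) * x)| := abs_add_le _ _
      _ ≤ |2 * S - 1| + 2 * p := by
          rw [abs_of_nonneg (mul_nonneg (by linarith) hc0)]
          nlinarith [hpnn, hc1]
  have h2 : |2 * S - 1| = 2 * |S - 1/2| := by
    rw [show (2 : ℝ) * S - 1 = 2 * (S - 1/2) by ring, abs_mul]
    norm_num
  rw [h2] at habs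
  exact habs
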